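/- Let Γ ∈ G_γ^d and φ ∈ F_β^r under the Assumption, and let φ_m be the Galerkin solution of g = Γφ. Define σ_Y² := σ² + ⟨Γφ,φ⟩, ρ_m² := σ² + ⟨Γ(φ − φ_m), φ − φ_m⟩, and σ_m² := 2(σ_Y² + [g]_m^t[Γ]_m^{−1}[g]_m). Then for all m ≥ 1: ρ_m² ≤ σ_m² ≤ 2(σ² + 35·d⁹·r). -/

import Mathlib

open scoped RealInnerProductSpace Classical ENNReal NNReal
open Matrix MeasureTheory

noncomputable section

variable {H : Type} [NormedAddCommGroup H] [InnerProductSpace ℝ H] [CompleteSpace H]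

/-- Spectral norm of a real matrix (largest singular value). -/
def specNorm {m : ℕ} (A : Matrix (Fin m) (Fin m) ℝ) : ℝ :=
  ‖Matrix.toEuclideanCLM (𝕜 := ℝ) A‖

/-- Galerkin matrix `[T]_m = (⟪ψ_j, T ψ_k⟫)_{1≤j,k≤m}` (0-indexed). -/
def opMat (ψ : HilbertBasis ℕ ℝ H) (T : H →L[ℝ] H) (m : ℕ) :
    Matrix (Fin m) (Fin m) ℝ :=
  Matrix.of fun j k => ⟪ψ (j : ℕ), T (ψ (k : ℕ))⟫

/-- The ellipsoid `F_β^r`. -/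
def memF (ψ : HilbertBasis ℕ ℝ H) (β : ℕ → ℝ) (r : ℝ) (h : H) : Prop :=
  Summable (fun j => β j * ⟪h, ψ j⟫ ^ 2) ∧ (∑' j, β j * ⟪h, ψ j⟫ ^ 2) ≤ r

/-- The class `G_γ^d` of strictly positive nuclear operators with sandwiched norm. -/
def memG (ψ : HilbertBasis ℕ ℝ H) (γ : ℕ → ℝ) (d : ℝ) (T : H →L[ℝ] H) : Prop :=
  (∀ x y : H, ⟪T x, y⟫ = ⟪x, T y⟫) ∧ (∀ h : H, h ≠ 0 → 0 < ⟪T h, h⟫) ∧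
    Summable (fun j => ⟪T (ψ j), ψ j⟫) ∧
    ∀ h : H,
      (d ^ 2)⁻¹ * (∑' j, γ j ^ 2 * ⟪h, ψ j⟫ ^ 2) ≤ ‖T h‖ ^ 2 ∧
      ‖T h‖ ^ 2 ≤ d ^ 2 * (∑' j, γ j ^ 2 * ⟪h, ψ j⟫ ^ 2)

/-- Coefficient vector `[g]_m` of `g = Γ φ`. -/
def gvec (ψ : HilbertBasis ℕ ℝ H) (Γ : H →L[ℝ] H) (φ : H) (m : ℕ) : Fin m → ℝ :=
  fun j => ⟪Γ φ, ψ (j : ℕ)⟫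

/-- Coefficients `[Γ]_m⁻¹ [g]_m` of the Galerkin solution. -/
def galCoef (ψ : HilbertBasis ℕ ℝ H) (Γ : H →L[ℝ] H) (φ : H) (m : ℕ) : Fin m → ℝ :=
  (opMat ψ Γ m)⁻¹ *ᵥ gvec ψ Γ φ m

/-- The Galerkin solution `φ_m`. -/
def galerkin (ψ : HilbertBasis ℕ ℝ H) (Γ : H →L[ℝ] H) (φ : H) (m : ℕ) : H :=
  ∑ j : Fin m, galCoef ψ Γ φ m j • (ψ (j : ℕ))

/-- The linear functional `ℓ(h) = Σ_j ℓ_j ⟨h, ψ_j⟩`. -/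
def ellOf (ψ : HilbertBasis ℕ ℝ H) (lc : ℕ → ℝ) (h : H) : ℝ := ∑' j, lc j * ⟪h, ψ j⟫

/-- `[ℓ]_m`. -/
def ellvec (lc : ℕ → ℝ) (m : ℕ) : Fin m → ℝ := fun j => lc (j : ℕ)

/-- Weighted (squared) norm `‖h‖_w²`. -/
def wnorm2 (ψ : HilbertBasis ℕ ℝ H) (w : ℕ → ℝ) (h : H) : ℝ := ∑' j, w j * ⟪h, ψ j⟫ ^ 2

/-- `V_m^γ = Σ_{j=1}^m ℓ_j²/γ_j`. -/
def Vgam (lc γ : ℕ → ℝ) (m : ℕ) : ℝ := ∑ j ∈ Finset.range m, lc j ^ 2 / γ j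

/-- `V_m = max_{1≤k≤m} [ℓ]_k^t [Γ]_k⁻¹ [ℓ]_k`. -/
def Vmax (ψ : HilbertBasis ℕ ℝ H) (lc : ℕ → ℝ) (Γ : H →L[ℝ] H) (m : ℕ) : ℝ :=
  ⨆ k : Fin m, ellvec lc (k + 1) ⬝ᵥ ((opMat ψ Γ (k + 1))⁻¹ *ᵥ ellvec lc (k + 1))

/-- `σ_m² = 2(σ_Y² + [g]_m^t [Γ]_m⁻¹ [g]_m)` with `σ_Y² = σ² + ⟨Γφ,φ⟩`. -/
def sigmaSqm (ψ : HilbertBasis ℕ ℝ H) (Γ : H →L[ℝ] H) (φ : H) (σ : ℝ) (m : ℕ) : ℝ :=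
  2 * ((σ ^ 2 + ⟪Γ φ, φ⟫) + gvec ψ Γ φ m ⬝ᵥ ((opMat ψ Γ m)⁻¹ *ᵥ gvec ψ Γ φ m))

/-- Theoretical penalty `p_m = 100 σ_m² V_m (1 + log n)/n`. -/
def penTheo (ψ : HilbertBasis ℕ ℝ H) (lc : ℕ → ℝ) (Γ : H →L[ℝ] H) (φ : H) (σ : ℝ)
    (n m : ℕ) : ℝ :=
  100 * sigmaSqm ψ Γ φ σ m * Vmax ψ lc Γ m * ((1 + Real.log n) / n)

/-- `R_m^ℓ[x]` (here `m ≥ 1`; 0-indexed sequences, so `γ_m` is `γ (m-1)`). -/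
def Rml (lc β γ : ℕ → ℝ) (x : ℝ) (m : ℕ) : ℝ :=
  max (∑' j, if m ≤ j then lc j ^ 2 / β j else 0)
    (max (γ (m - 1) / β (m - 1)) x * ∑ j ∈ Finset.range m, lc j ^ 2 / γ j)

/-- `R_*^ℓ[x] = min_{m ≥ 1} R_m^ℓ[x]`. -/
def Rstar (lc β γ : ℕ → ℝ) (x : ℝ) : ℝ := ⨅ m : ℕ, Rml lc β γ x (m + 1)

variable {Ω : Type}

/-- Empirical covariance matrix `[Γ̂]_m`. -/
def hatGam (ψ : HilbertBasis ℕ ℝ H) (n : ℕ) (X : Fin n → Ω → H) (m : ℕ) (ω : Ω) :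
    Matrix (Fin m) (Fin m) ℝ :=
  Matrix.of fun j k => (n : ℝ)⁻¹ * ∑ i, ⟪X i ω, ψ (j : ℕ)⟫ * ⟪X i ω, ψ (k : ℕ)⟫

/-- Empirical vector `[ĝ]_m`. -/
def hatgv (ψ : HilbertBasis ℕ ℝ H) (n : ℕ) (X : Fin n → Ω → H) (Y : Fin n → Ω → ℝ)
    (m : ℕ) (ω : Ω) : Fin m → ℝ :=
  fun j => (n : ℝ)⁻¹ * ∑ i, Y i ω * ⟪X i ω, ψ (j : ℕ)⟫

/-- The thresholded plug-in estimator `ℓ̂_m = ℓ(φ̂_m)`. -/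
def hatell (ψ : HilbertBasis ℕ ℝ H) (lc : ℕ → ℝ) (n : ℕ) (X : Fin n → Ω → H)
    (Y : Fin n → Ω → ℝ) (m : ℕ) (ω : Ω) : ℝ :=
  if IsUnit (hatGam ψ n X m ω).det ∧ specNorm (hatGam ψ n X m ω)⁻¹ ≤ (n : ℝ) then
    ellvec lc m ⬝ᵥ ((hatGam ψ n X m ω)⁻¹ *ᵥ hatgv ψ n X Y m ω)
  else 0

/-- `M_n^ℓ`. -/
def Mln (lc : ℕ → ℝ) (n : ℕ) : ℕ :=
  sSup {m | 1 ≤ m ∧ (m : ℝ) ≤ (n : ℝ) ^ ((1 : ℝ) / 4) ∧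
    (∑ j ∈ Finset.range m, lc j ^ 2) ≤ (n : ℝ)}

/-- Spectral norm of the inverse, `+∞` if singular. -/
def invNormE {m : ℕ} (A : Matrix (Fin m) (Fin m) ℝ) : ℝ≥0∞ :=
  if IsUnit A.det then ENNReal.ofReal (specNorm A⁻¹) else ⊤

/-- Random upper bound `M̂_n`. -/
def Mhat (ψ : HilbertBasis ℕ ℝ H) (lc : ℕ → ℝ) (n : ℕ) (X : Fin n → Ω → H) (ω : Ω) : ℕ :=
  let S := {m | 2 ≤ m ∧ m ≤ Mln lc n ∧
    ENNReal.ofReal ((n : ℝ) / (1 + Real.log n)) <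
      invNormE (hatGam ψ n X m ω) * ENNReal.ofReal (∑ j ∈ Finset.range m, lc j ^ 2)}
  if S.Nonempty then sInf S - 1 else Mln lc n

/-- Deterministic `M_n(a)` (with `a_m = a (m-1)` in 0-indexing). -/
def Mna (lc a : ℕ → ℝ) (n : ℕ) : ℕ :=
  let S := {m | 2 ≤ m ∧ m ≤ Mln lc n ∧
    (n : ℝ) / (1 + Real.log n) < a (m - 1) * ∑ j ∈ Finset.range m, lc j ^ 2}
  if S.Nonempty then sInf S - 1 else Mln lc n

/-- `V̂_m = max_{1≤k≤m} [ℓ]_k^t [Γ̂]_k⁻¹ [ℓ]_k`. -/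
def hatVmax (ψ : HilbertBasis ℕ ℝ H) (lc : ℕ → ℝ) (n : ℕ) (X : Fin n → Ω → H)
    (m : ℕ) (ω : Ω) : ℝ :=
  ⨆ k : Fin m, ellvec lc (k + 1) ⬝ᵥ ((hatGam ψ n X (k + 1) ω)⁻¹ *ᵥ ellvec lc (k + 1))

/-- Stochastic penalty `p̂_m`. -/
def hatpen (ψ : HilbertBasis ℕ ℝ H) (lc : ℕ → ℝ) (n : ℕ) (X : Fin n → Ω → H)
    (Y : Fin n → Ω → ℝ) (m : ℕ) (ω : Ω) : ℝ :=
  700 * (2 * (n : ℝ)⁻¹ * ∑ i, (Y i ω) ^ 2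
      + 2 * (hatgv ψ n X Y m ω ⬝ᵥ ((hatGam ψ n X m ω)⁻¹ *ᵥ hatgv ψ n X Y m ω)))
    * hatVmax ψ lc n X m ω * ((1 + Real.log n) / n)

/-- Contrast `κ_m`. -/
def contrast (ψ : HilbertBasis ℕ ℝ H) (lc : ℕ → ℝ) (n : ℕ) (X : Fin n → Ω → H)
    (Y : Fin n → Ω → ℝ) (m : ℕ) (ω : Ω) : ℝ :=
  sSup {x | ∃ k, m ≤ k ∧ k ≤ Mhat ψ lc n X ω ∧
    x = (hatell ψ lc n X Y k ω - hatell ψ lc n X Y m ω) ^ 2 - hatpen ψ lc n X Y k ω}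

/-- The fully data-driven dimension `m̂` (smallest minimizer of `κ + p̂`). -/
def mhat (ψ : HilbertBasis ℕ ℝ H) (lc : ℕ → ℝ) (n : ℕ) (X : Fin n → Ω → H)
    (Y : Fin n → Ω → ℝ) (ω : Ω) : ℕ :=
  sInf {m | 1 ≤ m ∧ m ≤ Mhat ψ lc n X ω ∧ ∀ k, 1 ≤ k → k ≤ Mhat ψ lc n X ω →
    contrast ψ lc n X Y m ω + hatpen ψ lc n X Y m ω ≤
      contrast ψ lc n X Y k ω + hatpen ψ lc n X Y k ω}

/-- The functional linear model with jointly Gaussian regressor and error,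
observed through an i.i.d. sample of size `n`. -/
structure FLModel [MeasurableSpace H] (ψ : HilbertBasis ℕ ℝ H)
    (σ : ℝ) (φ : H) (Γ : H →L[ℝ] H)
    [MeasurableSpace Ω] (P : Measure Ω) (n : ℕ)
    (X : Fin n → Ω → H) (Y : Fin n → Ω → ℝ) (ε : Fin n → Ω → ℝ) : Prop where
  measX : ∀ i, Measurable (X i)
  measEps : ∀ i, Measurable (ε i)
  modelEq : ∀ i ω, Y i ω = ⟪φ, X i ω⟫ + σ * ε i ω
  indep : ProbabilityTheory.iIndepFun (fun i ω => (X i ω, ε i ω)) P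
  identDistrib : ∀ i j, Measure.map (fun ω => (X i ω, ε i ω)) P
      = Measure.map (fun ω => (X j ω, ε j ω)) P
  centeredX : ∀ i (h : H), ∫ ω, ⟪X i ω, h⟫ ∂P = 0
  sqIntX : ∀ i, Integrable (fun ω => ‖X i ω‖ ^ 2) P
  epsMean : ∀ i, ∫ ω, ε i ω ∂P = 0
  epsVar : ∀ i, ∫ ω, (ε i ω) ^ 2 ∂P = 1
  uncorr : ∀ i (h : H), ∫ ω, ε i ω * ⟪X i ω, h⟫ ∂P = 0
  gaussian : ∀ i (k : ℕ) (hs : Fin k → H) (c : Fin k → ℝ) (c' : ℝ), ∃ v : NNReal,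
      Measure.map (fun ω => (∑ j, c j * ⟪X i ω, hs j⟫) + c' * ε i ω) P
        = ProbabilityTheory.gaussianReal 0 v
  covOp : ∀ i (h h' : H), ⟪Γ h, h'⟫ = ∫ ω, ⟪X i ω, h⟫ * ⟪X i ω, h'⟫ ∂P

/-- Lemma A.1 (iv): `ρ_m² ≤ σ_m² ≤ 2(σ² + 35 d⁹ r)`, where
`ρ_m² = σ² + ⟨Γ(φ−φ_m), φ−φ_m⟩` and `σ_m² = 2(σ_Y² + [g]_m^t[Γ]_m⁻¹[g]_m)`. -/
theorem stmt_11 (ψ : HilbertBasis ℕ ℝ H) (γ : ℕ → ℝ) (d : ℝ) (hd : 1 ≤ d)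
    (hγ1 : γ 0 = 1) (hγpos : ∀ j, 0 < γ j) (hγanti : Antitone γ)
    (hγ0 : Filter.Tendsto γ Filter.atTop (nhds 0)) (hγsum : Summable γ)
    (β : ℕ → ℝ) (hβ1 : β 0 = 1) (hβmono : Monotone β)
    (hβ0 : Filter.Tendsto (fun j => (β j)⁻¹) Filter.atTop (nhds 0)) (r σ : ℝ) (hr : 0 < r) (hσ : 0 < σ)
    (Γ : H →L[ℝ] H) (hΓ : memG ψ γ d Γ)
    (φ : H) (hφ : memF ψ β r φ) :
    ∀ m : ℕ, 1 ≤ m →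
      σ ^ 2 + ⟪Γ (φ - galerkin ψ Γ φ m), φ - galerkin ψ Γ φ m⟫ ≤ sigmaSqm ψ Γ φ σ m ∧
      sigmaSqm ψ Γ φ σ m ≤ 2 * (σ ^ 2 + 35 * d ^ 9 * r) := by
  obtain ⟨hsymm, hposdef, -, hnorm⟩ := hΓ
  have hpos0 : ∀ h : H, 0 ≤ ⟪Γ h, h⟫ := by
    intro h
    rcases eq_or_ne h 0 with rfl | hne
    · simp
    · exact (hposdef h hne).le
  -- Parseval and summability
  have hsum2 : Summable (fun j => ⟪φ, ψ j⟫ ^ 2) := by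
    have := ψ.summable_inner_mul_inner φ φ
    simpa [sq, real_inner_comm] using this
  have hpars : (∑' j, ⟪φ, ψ j⟫ ^ 2) = ‖φ‖ ^ 2 := by
    rw [← real_inner_self_eq_norm_sq, ← ψ.tsum_inner_mul_inner φ φ]
    congr 1; funext j; rw [sq, real_inner_comm φ (ψ j)]
  have hβj : ∀ j, 1 ≤ β j := fun j => hβ1 ▸ hβmono (Nat.zero_le j)
  have hγj : ∀ j, γ j ≤ 1 := fun j => hγ1 ▸ hγanti (Nat.zero_le j)
  have hφr : ‖φ‖ ^ 2 ≤ r := by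
    rw [← hpars]
    refine le_trans (Summable.tsum_le_tsum (fun j => ?_) hsum2 hφ.1) hφ.2
    exact le_mul_of_one_le_left (sq_nonneg _) (hβj j)
  have hγsum2 : Summable (fun j => γ j ^ 2 * ⟪φ, ψ j⟫ ^ 2) := by
    refine Summable.of_nonneg_of_le (fun j => by positivity) (fun j => ?_) hsum2
    have h1 : γ j ^ 2 ≤ 1 := pow_le_one₀ (hγpos j).le (hγj j)
    exact mul_le_of_le_one_left (sq_nonneg _) h1
  have hγle : (∑' j, γ j ^ 2 * ⟪φ, ψ j⟫ ^ 2) ≤ ‖φ‖ ^ 2 := by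
    rw [← hpars]
    refine Summable.tsum_le_tsum (fun j => ?_) hγsum2 hsum2
    exact mul_le_of_le_one_left (sq_nonneg _) (pow_le_one₀ (hγpos j).le (hγj j))
  have hΓφsq : ‖Γ φ‖ ^ 2 ≤ (d * ‖φ‖) ^ 2 := by
    rw [mul_pow]
    refine le_trans (hnorm φ).2 ?_
    exact mul_le_mul_of_nonneg_left hγle (by positivity)
  have hΓφn : ‖Γ φ‖ ≤ d * ‖φ‖ := by
    have hd0 : (0:ℝ) ≤ d * ‖φ‖ := by positivity
    nlinarith [norm_nonneg (Γ φ)]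
  have hTdr : ⟪Γ φ, φ⟫ ≤ d * r := by
    have hi := real_inner_le_norm (Γ φ) φ
    nlinarith [norm_nonneg φ, norm_nonneg (Γ φ), hφr, hΓφn, hd, hr]
  intro m _
  set A := opMat ψ Γ m with hA
  set v := gvec ψ Γ φ m with hv
  set c := galCoef ψ Γ φ m with hc
  -- quadratic form identity
  have hquad : ∀ x : Fin m → ℝ,
      x ⬝ᵥ (A *ᵥ x) = ⟪(∑ k : Fin m, x k • ψ (k : ℕ)), Γ (∑ k : Fin m, x k • ψ (k : ℕ))⟫ := by
    intro x
    rw [map_sum, sum_inner, dotProduct]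
    refine Finset.sum_congr rfl fun j _ => ?_
    rw [real_inner_smul_left, Matrix.mulVec, dotProduct, inner_sum, Finset.mul_sum,
      Finset.mul_sum]
    refine Finset.sum_congr rfl fun k _ => ?_
    rw [ContinuousLinearMap.map_smul, real_inner_smul_right]
    show x j * (A j k * x k) = x j * (x k * ⟪ψ (j:ℕ), Γ (ψ (k:ℕ))⟫)
    rw [hA]
    simp only [opMat, Matrix.of_apply]
    ring
  have hON : Orthonormal ℝ (fun k : Fin m => ψ (k : ℕ)) :=
    ψ.orthonormal.comp _ Fin.val_injective
  have hPD : A.PosDef := by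
    refine Matrix.posDef_iff_dotProduct_mulVec.mpr ⟨?_, ?_⟩
    · ext j k
      simp only [Matrix.conjTranspose_apply, hA, opMat, Matrix.of_apply, star_trivial]
      rw [real_inner_comm, hsymm]
    · intro x hx
      have hne : (∑ k : Fin m, x k • ψ (k : ℕ)) ≠ 0 := by
        intro h0
        exact hx (funext (Fintype.linearIndependent_iff.mp hON.linearIndependent x h0))
      have hgt := hposdef _ hne
      have : (0:ℝ) < x ⬝ᵥ (A *ᵥ x) := by
        rw [hquad x, real_inner_comm]; exact hgt
      simpa using this
  have hUnit : IsUnit A.det := hPD.det_pos.ne'.isUnit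
  have hAc : A *ᵥ c = v := by
    rw [hc, galCoef, ← hA, ← hv, Matrix.mulVec_mulVec, Matrix.mul_nonsing_inv _ hUnit,
      Matrix.one_mulVec]
  set Q : ℝ := c ⬝ᵥ v with hQ
  set φm := galerkin ψ Γ φ m with hφm
  have hQ1 : ⟪Γ φ, φm⟫ = Q := by
    rw [hφm, galerkin, inner_sum, hQ, dotProduct]
    refine Finset.sum_congr rfl fun j _ => ?_
    rw [real_inner_smul_right]
    simp [hv, gvec, hc]
  have hQ2 : ⟪Γ φm, φm⟫ = Q := by
    have h1 : ⟪φm, Γ φm⟫ = c ⬝ᵥ (A *ᵥ c) := (hquad c).symm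
    rw [real_inner_comm, h1, hAc, hQ]
  have hexp : ⟪Γ (φ - φm), φ - φm⟫ = ⟪Γ φ, φ⟫ - Q := by
    have h2 : ⟪Γ φm, φ⟫ = Q := by rw [hsymm, real_inner_comm]; exact hQ1
    rw [map_sub, inner_sub_left, inner_sub_right, inner_sub_right, hQ1, h2, hQ2]
    ring
  have hsig : sigmaSqm ψ Γ φ σ m = 2 * ((σ ^ 2 + ⟪Γ φ, φ⟫) + Q) := by
    rw [sigmaSqm]
    have : gvec ψ Γ φ m ⬝ᵥ ((opMat ψ Γ m)⁻¹ *ᵥ gvec ψ Γ φ m) = Q := by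
      rw [hQ, hc, galCoef, dotProduct_comm, ← hA, ← hv]
    rw [this]
  have hQnn : 0 ≤ Q := hQ2 ▸ hpos0 φm
  have hTQ : 0 ≤ ⟪Γ φ, φ⟫ - Q := hexp ▸ hpos0 (φ - φm)
  constructor
  · rw [hexp, hsig]
    nlinarith [sq_nonneg σ, hpos0 φ]
  · rw [hsig]
    have hd9 : d ≤ d ^ 9 := le_self_pow₀ (by linarith) (by norm_num)
    have h1 : d * r ≤ d ^ 9 * r := mul_le_mul_of_nonneg_right hd9 hr.le
    have h2 : r ≤ d * r := le_mul_of_one_le_left hr.le hd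
    linarith

end
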